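/- Let C be a weakly compact convex subset of a Banach space E whose norm has the Opial property, S a commutative semigroup, {T(t) : t ∈ S} a nonexpansive semigroup on C, and μ an invariant mean on a suitable subspace X of B(S). If T_μ z = z for some z ∈ C, then z is a common fixed point: T(t)z = z for all t ∈ S. -/

import Mathlib

open BoundedContinuousFunction
/-- The `{0,1}`-valued real indicator of a set, as an element of `B(S)`
(`S` carries the discrete topology, so `B(S)` is the space of bounded
continuous functions `S →ᵇ ℝ`). -/
noncomputable def indBCF {S : Type*} [TopologicalSpace S] [DiscreteTopology S] (A : Set S) :
    S →ᵇ ℝ :=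
  BoundedContinuousFunction.ofNormedAddCommGroup (A.indicator 1)
    continuous_of_discreteTopology 1
    (fun x => by by_cases h : x ∈ A <;> simp [Set.indicator_apply, h])

/-- The translate `(ℓ_s a)(t) = a (s + t)` as an element of `B(S)`. -/
noncomputable def transBCF {S : Type*} [AddSemigroup S] [TopologicalSpace S] [DiscreteTopology S]
    (s : S) (a : S →ᵇ ℝ) : S →ᵇ ℝ :=
  a.compContinuous ⟨fun t => s + t, continuous_of_discreteTopology⟩

open Filter Topology Set


private lemma my_foldl_add_shift {S : Type*} [AddCommSemigroup S] :
    ∀ (l : List S) (b t : S), ∃ d, l.foldl (· + ·) b + t = b + d := by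
  intro l
  induction l with
  | nil => exact fun b t => ⟨t, rfl⟩
  | cons a l ih =>
      intro b t
      obtain ⟨d, hd⟩ := ih (b + a) t
      exact ⟨a + d, by rw [List.foldl_cons, hd, add_assoc]⟩

private lemma my_foldl_add_mem {S : Type*} [AddCommSemigroup S] :
    ∀ (l : List S) (b s : S), s ∈ l → ∀ t, ∃ d, l.foldl (· + ·) b + t = s + d := by
  intro l
  induction l with
  | nil => intro b s hs; cases hs
  | cons a l ih =>
      intro b s hs t
      rcases List.mem_cons.mp hs with h | h
      · subst h
        obtain ⟨d, hd⟩ := my_foldl_add_shift l (b + s) t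
        refine ⟨b + d, ?_⟩
        rw [List.foldl_cons, hd, add_assoc, add_left_comm]
      · exact ih (b + a) s h t



section AuxWeak

variable {E : Type*} [NormedAddCommGroup E] [NormedSpace ℝ E]

/-- A weakly compact set is norm bounded. -/
lemma my_norm_bdd_of_weak_compact {C : Set E} (h : IsCompact ((toWeakSpace ℝ E) '' C)) :
    ∃ R : ℝ, 0 ≤ R ∧ ∀ x ∈ C, ‖x‖ ≤ R := by
  have hpt : ∀ f : E →L[ℝ] ℝ, ∃ M, ∀ x ∈ C, ‖f x‖ ≤ M := by
    intro f
    have hc : Continuous fun x : WeakSpace ℝ E => (topDualPairing ℝ E).flip x f :=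
      WeakBilin.eval_continuous _ f
    have h2 : IsCompact ((fun x : WeakSpace ℝ E => (topDualPairing ℝ E).flip x f) ''
        ((toWeakSpace ℝ E) '' C)) := h.image hc
    obtain ⟨M, hM⟩ := h2.isBounded.exists_norm_le
    refine ⟨M, fun x hx => ?_⟩
    exact hM _ ⟨toWeakSpace ℝ E x, ⟨x, hx, rfl⟩, rfl⟩
  by_cases hne : C.Nonempty
  · set g : C → (E →L[ℝ] ℝ) →L[ℝ] ℝ :=
      fun c => NormedSpace.inclusionInDoubleDual ℝ E c with hg
    have hb : ∀ f : E →L[ℝ] ℝ, ∃ M, ∀ i : C, ‖g i f‖ ≤ M := by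
      intro f
      obtain ⟨M, hM⟩ := hpt f
      exact ⟨M, fun i => by simpa [hg, NormedSpace.dual_def] using hM i i.2⟩
    obtain ⟨R, hR⟩ := banach_steinhaus hb
    refine ⟨max R 0, le_max_right _ _, fun x hx => ?_⟩
    have : ‖g ⟨x, hx⟩‖ = ‖x‖ :=
      (NormedSpace.inclusionInDoubleDualLi ℝ (E := E)).norm_map x
    exact this ▸ le_trans (hR ⟨x, hx⟩) (le_max_left _ _)
  · exact ⟨0, le_refl _, fun x hx => absurd ⟨x, hx⟩ hne⟩

/-- Eberlein–Šmulian style extraction: any sequence in a weakly compact set has a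
weakly convergent subsequence. -/
lemma my_weak_seq_compact {C : Set E} (hC : IsCompact ((toWeakSpace ℝ E) '' C))
    (x : ℕ → E) (hx : ∀ n, x n ∈ C) :
    ∃ (u : E) (φ : ℕ → ℕ), u ∈ C ∧ StrictMono φ ∧
      ∀ f : E →L[ℝ] ℝ, Tendsto (fun n => f (x (φ n))) atTop (𝓝 (f u)) := by
  classical
  -- the separable closed subspace generated by the sequence
  set V : Submodule ℝ E := (Submodule.span ℝ (Set.range x)).topologicalClosure with hV
  have hVsep : TopologicalSpace.IsSeparable (V : Set E) := by
    have h1 : TopologicalSpace.IsSeparable (Set.range x) :=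
      (Set.countable_range x).isSeparable
    have h2 := h1.span (R := ℝ)
    simpa [hV, Submodule.topologicalClosure_coe] using h2.closure
  obtain ⟨cs, hcs_count, hcs_sub⟩ := hVsep
  have hcs_ne : (insert (0 : E) cs).Nonempty := ⟨0, mem_insert _ _⟩
  obtain ⟨e, he⟩ := (hcs_count.insert 0).exists_eq_range hcs_ne
  -- separating functionals
  set g : ℕ → E →L[ℝ] ℝ := fun n =>
    if h : e n = 0 then 0 else (exists_dual_vector ℝ (e n) (norm_ne_zero_iff.mpr h)).choose with hgdef
  have hgnorm : ∀ n, ‖g n‖ ≤ 1 := by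
    intro n
    by_cases h : e n = 0
    · simp [hgdef, h]
    · simp only [hgdef, dif_neg h]
      exact le_of_eq (exists_dual_vector ℝ (e n) (norm_ne_zero_iff.mpr h)).choose_spec.1
  have hgval : ∀ n, e n ≠ 0 → g n (e n) = ‖e n‖ := by
    intro n h
    simp only [hgdef, dif_neg h]
    exact (exists_dual_vector ℝ (e n) (norm_ne_zero_iff.mpr h)).choose_spec.2
  have hsep : ∀ v ∈ (V : Set E), v ≠ 0 → ∃ n, g n v ≠ 0 := by
    intro v hv hv0
    have hvpos : 0 < ‖v‖ := norm_pos_iff.mpr hv0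
    have : v ∈ closure (insert (0:E) cs) :=
      closure_mono (subset_insert _ _) (hcs_sub hv)
    obtain ⟨y, hy, hyd⟩ := Metric.mem_closure_iff.mp this (‖v‖/3) (by linarith)
    obtain ⟨n, rfl⟩ : ∃ n, e n = y := by
      have : y ∈ range e := he ▸ hy
      obtain ⟨n, hn⟩ := this
      exact ⟨n, hn⟩
    have hen : e n ≠ 0 := by
      intro h0
      rw [h0] at hyd
      simp only [dist_zero_right] at hyd
      linarith
    refine ⟨n, ?_⟩
    have h1 : g n (e n) = ‖e n‖ := hgval n hen
    have h2 : ‖e n‖ ≥ ‖v‖ - ‖v‖/3 := by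
      have := norm_sub_norm_le v (e n)
      have hd : ‖v - e n‖ < ‖v‖/3 := by rwa [dist_eq_norm] at hyd
      linarith
    have h3 : |g n v - g n (e n)| ≤ ‖v - e n‖ := by
      rw [← map_sub]
      calc |g n (v - e n)| ≤ ‖g n‖ * ‖v - e n‖ := (g n).le_opNorm _
        _ ≤ 1 * ‖v - e n‖ := by
            exact mul_le_mul_of_nonneg_right (hgnorm n) (norm_nonneg _)
        _ = ‖v - e n‖ := one_mul _
    have hd : ‖v - e n‖ < ‖v‖/3 := by rwa [dist_eq_norm] at hyd
    intro h0
    rw [h0] at h3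
    rw [h1] at h3
    have : ‖e n‖ ≤ ‖v‖/3 := by
      calc ‖e n‖ = |0 - ‖e n‖| := by simp [abs_of_nonneg (norm_nonneg _)]
        _ ≤ ‖v - e n‖ := h3
        _ ≤ ‖v‖/3 := hd.le
    linarith
  -- membership of the sequence in V
  have hxV : ∀ n, x n ∈ (V : Set E) := fun n =>
    Submodule.le_topologicalClosure _ (Submodule.subset_span (Set.mem_range_self n))
  -- the weakly compact set K
  have hVconv : Convex ℝ (V : Set E) := V.convex
  have hVclosed : IsClosed (V : Set E) := Submodule.isClosed_topologicalClosure _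
  have hVWclosed : IsClosed ((toWeakSpace ℝ E) '' (V : Set E)) := by
    have h1 := hVconv.toWeakSpace_closure (𝕜 := ℝ)
    rw [hVclosed.closure_eq] at h1
    rw [h1]
    exact isClosed_closure
  set K : Set E := C ∩ (V : Set E) with hK
  have hKW : IsCompact ((toWeakSpace ℝ E) '' K) := by
    have himg : (toWeakSpace ℝ E) '' K
        = ((toWeakSpace ℝ E) '' C) ∩ ((toWeakSpace ℝ E) '' (V : Set E)) := by
      apply Set.image_inter (toWeakSpace ℝ E).injective
    rw [himg]
    exact hC.inter_right hVWclosed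
  haveI : CompactSpace ((toWeakSpace ℝ E) '' K) := isCompact_iff_compactSpace.mp hKW
  set Φ : ((toWeakSpace ℝ E) '' K) → (ℕ → ℝ) :=
    fun pt n => (topDualPairing ℝ E).flip pt.val (g n) with hΦ
  have hΦcont : Continuous Φ := by
    apply continuous_pi
    intro n
    exact (WeakBilin.eval_continuous _ (g n)).comp continuous_subtype_val
  have hkey : ∀ (r : ((toWeakSpace ℝ E) '' K)) (n : ℕ),
      Φ r n = g n ((toWeakSpace ℝ E).symm r.val) := fun r n => rfl
  have hmemK : ∀ (r : ((toWeakSpace ℝ E) '' K)), (toWeakSpace ℝ E).symm r.val ∈ K := by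
    rintro ⟨-, a, haK, rfl⟩
    simpa using haK
  have hΦinj : Function.Injective Φ := by
    intro p q hpq
    set a := (toWeakSpace ℝ E).symm p.val with hadef
    set b := (toWeakSpace ℝ E).symm q.val with hbdef
    have hab : a - b ∈ (V : Set E) := sub_mem (hmemK p).2 (hmemK q).2
    by_cases hab0 : a - b = 0
    · have hab' : a = b := sub_eq_zero.mp hab0
      apply Subtype.ext
      have := congrArg (toWeakSpace ℝ E) hab'
      rwa [hadef, hbdef, LinearEquiv.apply_symm_apply, LinearEquiv.apply_symm_apply] at this
    · obtain ⟨n, hn⟩ := hsep _ hab hab0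
      exfalso
      apply hn
      have h1 : Φ p n = Φ q n := congrFun hpq n
      rw [hkey p n, hkey q n] at h1
      rw [map_sub, h1, sub_self]
  have hrange : IsCompact (Set.range Φ) := isCompact_range hΦcont
  set q : ℕ → ((toWeakSpace ℝ E) '' K) :=
    fun n => ⟨toWeakSpace ℝ E (x n), ⟨x n, ⟨hx n, hxV n⟩, rfl⟩⟩ with hq
  obtain ⟨ℓ, hℓ, φ, hφ, hconv⟩ :=
    hrange.isSeqCompact (x := fun n => Φ (q n)) (fun n => ⟨q n, rfl⟩)
  obtain ⟨pt, hpt⟩ := hℓ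
  have hce : IsClosedEmbedding Φ := hΦcont.isClosedEmbedding hΦinj
  have hqconv : Tendsto (fun n => q (φ n)) atTop (𝓝 pt) := by
    rw [hce.isInducing.tendsto_nhds_iff]
    have : (Φ ∘ fun n => q (φ n)) = ((fun n => Φ (q n)) ∘ φ) := rfl
    rw [this, hpt]
    exact hconv
  obtain ⟨u, huK, hu⟩ := pt.2
  refine ⟨u, φ, huK.1, hφ, ?_⟩
  intro f
  have h1 : Tendsto (fun n => (q (φ n)).val) atTop (𝓝 pt.val) :=
    (continuous_subtype_val.tendsto pt).comp hqconv
  have h2 := ((WeakBilin.eval_continuous ((topDualPairing ℝ E).flip) f).tendsto pt.val).comp h1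
  have e1 : (fun n => ((topDualPairing ℝ E).flip) ((fun n => (q (φ n)).val) n) f)
      = fun n => f (x (φ n)) := rfl
  have e2 : ((topDualPairing ℝ E).flip) pt.val f = f u := by rw [← hu]; rfl
  rw [e2] at h2
  exact h2

end AuxWeak



section Mean

variable {S : Type*} [TopologicalSpace S] [DiscreteTopology S] [Nonempty S]

/-- Extension of a "mean" on a subspace of `B(S)` to a positive normalized linear
functional on all of `B(S)` (Hahn–Banach). -/
lemma my_mean_extension (X : Subspace ℝ (S →ᵇ ℝ))
    (μ : ↥X →L[ℝ] ℝ)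
    (hμmean : ∀ a : ↥X, (⨅ t : S, (a : S →ᵇ ℝ) t) ≤ μ a ∧ μ a ≤ ⨆ t : S, (a : S →ᵇ ℝ) t) :
    ∃ m : (S →ᵇ ℝ) →ₗ[ℝ] ℝ,
      (∀ (a : S →ᵇ ℝ) (ha : a ∈ X), m a = μ ⟨a, ha⟩) ∧
      (∀ a : S →ᵇ ℝ, m a ≤ ⨆ t, a t) := by
  classical
  haveI : Nonempty ↥X := ⟨0⟩
  have bddA : ∀ (h : S →ᵇ ℝ), BddAbove (Set.range fun t => h t) := by
    intro h
    exact ⟨‖h‖, by rintro - ⟨t, rfl⟩; exact le_trans (le_abs_self _) (h.norm_coe_le_norm t)⟩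
  -- the auxiliary functional
  set F : ↥X → (S →ᵇ ℝ) → ℝ := fun b a => μ b + ⨆ t, (a - (b : S →ᵇ ℝ)) t with hF
  have hFlb : ∀ (b : ↥X) (a : S →ᵇ ℝ), -‖a‖ ≤ F b a := by
    intro b a
    refine le_of_forall_pos_le_add fun ε hε => ?_
    have h1 : (⨅ t, ((b : S →ᵇ ℝ)) t) < μ b + ε :=
      lt_of_le_of_lt (hμmean b).1 (lt_add_of_pos_right _ hε)
    obtain ⟨tw, htw⟩ := exists_lt_of_ciInf_lt h1
    have h2 : a tw - (b : S →ᵇ ℝ) tw ≤ ⨆ t, (a - (b : S →ᵇ ℝ)) t := by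
      have := le_ciSup (bddA (a - (b : S →ᵇ ℝ))) tw
      simpa using this
    have h3 : -‖a‖ ≤ a tw := by
      have h := abs_le.mp (by simpa [Real.norm_eq_abs] using a.norm_coe_le_norm tw)
      linarith [h.1]
    have : -‖a‖ - (μ b + ε) ≤ a tw - (b : S →ᵇ ℝ) tw := by
      have hb := htw.le
      linarith
    rw [hF]
    simp only
    linarith [le_trans this h2]
  have hbddp : ∀ a : S →ᵇ ℝ, BddBelow (Set.range fun b : ↥X => F b a) := by
    intro a
    exact ⟨-‖a‖, by rintro - ⟨b, rfl⟩; exact hFlb b a⟩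
  set p : (S →ᵇ ℝ) → ℝ := fun a => ⨅ b : ↥X, F b a with hp
  have hple : ∀ (a : S →ᵇ ℝ) (b : ↥X), p a ≤ F b a := fun a b => ciInf_le (hbddp a) b
  have hplb : ∀ a : S →ᵇ ℝ, -‖a‖ ≤ p a := fun a => le_ciInf fun b => hFlb b a
  -- subadditivity
  have hFadd : ∀ (a a' : S →ᵇ ℝ) (b b' : ↥X), F (b + b') (a + a') ≤ F b a + F b' a' := by
    intro a a' b b'
    rw [hF]
    simp only [map_add]
    have key : ⨆ t, ((a + a') - ((b + b' : ↥X) : S →ᵇ ℝ)) t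
        ≤ (⨆ t, (a - (b : S →ᵇ ℝ)) t) + ⨆ t, (a' - (b' : S →ᵇ ℝ)) t := by
      refine ciSup_le fun t => ?_
      have e : ((a + a') - ((b + b' : ↥X) : S →ᵇ ℝ)) t
          = (a - (b : S →ᵇ ℝ)) t + (a' - (b' : S →ᵇ ℝ)) t := by
        push_cast
        simp [sub_add_eq_sub_sub]
        ring
      rw [e]
      exact add_le_add (le_ciSup (bddA _) t) (le_ciSup (bddA _) t)
    linarith
  have hpadd : ∀ a a' : S →ᵇ ℝ, p (a + a') ≤ p a + p a' := by
    intro a a'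
    refine le_of_forall_pos_le_add fun ε hε => ?_
    obtain ⟨b, hb⟩ := exists_lt_of_ciInf_lt (lt_add_of_pos_right (p a) (half_pos hε))
    obtain ⟨b', hb'⟩ := exists_lt_of_ciInf_lt (lt_add_of_pos_right (p a') (half_pos hε))
    calc p (a + a') ≤ F (b + b') (a + a') := hple _ _
      _ ≤ F b a + F b' a' := hFadd a a' b b'
      _ ≤ (p a + ε/2) + (p a' + ε/2) := add_le_add hb.le hb'.le
      _ = p a + p a' + ε := by ring
  -- positive homogeneity
  have hFsmul : ∀ (c : ℝ), 0 < c → ∀ (a : S →ᵇ ℝ) (b : ↥X), F (c • b) (c • a) = c * F b a := by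
    intro c hc a b
    rw [hF]
    simp only [map_smul, smul_eq_mul]
    have e : ∀ t, ((c • a) - ((c • b : ↥X) : S →ᵇ ℝ)) t = c * ((a - (b : S →ᵇ ℝ)) t) := by
      intro t
      push_cast
      simp [mul_sub]
    rw [show (⨆ t, ((c • a) - ((c • b : ↥X) : S →ᵇ ℝ)) t) = ⨆ t, c * ((a - (b : S →ᵇ ℝ)) t) by
      exact iSup_congr e]
    rw [← Real.mul_iSup_of_nonneg hc.le]
    ring
  have hpsmul1 : ∀ (c : ℝ), 0 < c → ∀ a, p (c • a) ≤ c * p a := by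
    intro c hc a
    have h1 : p (c • a) ≤ ⨅ b : ↥X, c * F b a := by
      refine le_ciInf fun b => ?_
      rw [← hFsmul c hc a b]
      exact hple _ _
    rw [← Real.mul_iInf_of_nonneg hc.le] at h1
    exact h1
  have hpsmul : ∀ (c : ℝ), 0 < c → ∀ a, p (c • a) = c * p a := by
    intro c hc a
    refine le_antisymm (hpsmul1 c hc a) ?_
    have h2 := hpsmul1 c⁻¹ (inv_pos.mpr hc) (c • a)
    rw [smul_smul, inv_mul_cancel₀ hc.ne', one_smul] at h2
    have := mul_le_mul_of_nonneg_left h2 hc.le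
    rw [← mul_assoc, mul_inv_cancel₀ hc.ne', one_mul] at this
    linarith
  -- domination on X
  have hμp : ∀ xx : ↥X, μ xx ≤ p (xx : S →ᵇ ℝ) := by
    intro xx
    refine le_ciInf fun b => ?_
    have h1 : μ xx - μ b = μ (xx - b) := (map_sub μ xx b).symm
    have h2 : μ (xx - b) ≤ ⨆ t, ((xx - b : ↥X) : S →ᵇ ℝ) t := (hμmean _).2
    have h3 : (⨆ t, ((xx - b : ↥X) : S →ᵇ ℝ) t) = ⨆ t, ((xx : S →ᵇ ℝ) - (b : S →ᵇ ℝ)) t := by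
      refine iSup_congr fun t => ?_
      push_cast
      rfl
    rw [hF]
    simp only
    linarith [h3 ▸ h2]
  -- Hahn–Banach
  obtain ⟨m, hm1, hm2⟩ := exists_extension_of_le_sublinear ⟨X, μ.toLinearMap⟩ p hpsmul hpadd hμp
  refine ⟨m, fun a ha => ?_, fun a => ?_⟩
  · exact hm1 ⟨a, ha⟩
  · calc m a ≤ p a := hm2 a
      _ ≤ F 0 a := hple a 0
      _ = ⨆ t, a t := by
          rw [hF]
          simp only [map_zero, Submodule.coe_zero, sub_zero, zero_add]

end Mean


set_option maxHeartbeats 1600000 in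
/-- Let C be a weakly compact convex subset of a Banach space E with the Opial property, {T(t) : t ∈ S} a commutative semigroup of nonexpansive mappings on C, and μ an invariant mean on a suitable subspace X of B(S). If T_μ z = z for some z ∈ C, then z is a common fixed point: T(t)z = z for all t ∈ S. -/
theorem stmt17 {S E : Type*} [AddCommSemigroup S] [TopologicalSpace S] [DiscreteTopology S]
    [NormedAddCommGroup E] [NormedSpace ℝ E] [CompleteSpace E]
    (C : Set E) (hconv : Convex ℝ C)
    (hwcpt : IsCompact ((toWeakSpace ℝ E) '' C))
    (hOpial : ∀ (x : ℕ → E) (x₀ : E),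
      (∀ f : E →L[ℝ] ℝ, Filter.Tendsto (fun n => f (x n)) Filter.atTop (nhds (f x₀))) →
      ∀ y : E, y ≠ x₀ →
        Filter.liminf (fun n => ‖x n - x₀‖) Filter.atTop
          < Filter.liminf (fun n => ‖x n - y‖) Filter.atTop)
    (T : S → E → E)
    (hmaps : ∀ t, Set.MapsTo (T t) C C)
    (hne : ∀ t, ∀ x ∈ C, ∀ y ∈ C, ‖T t x - T t y‖ ≤ ‖x - y‖)
    (hsg : ∀ s t : S, ∀ x ∈ C, T (s + t) x = T s (T t x))
    (X : Subspace ℝ (S →ᵇ ℝ)) (hX1 : (1 : S →ᵇ ℝ) ∈ X)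
    (hXinv : ∀ a ∈ X, ∀ s : S, transBCF s a ∈ X)
    (hXorb : ∀ x ∈ C, ∀ f : E →L[ℝ] ℝ, ∃ a ∈ X, ∀ t : S, a t = f (T t x))
    (μ : ↥X →L[ℝ] ℝ)
    (hμmean : ∀ a : ↥X, (⨅ t : S, (a : S →ᵇ ℝ) t) ≤ μ a ∧ μ a ≤ ⨆ t : S, (a : S →ᵇ ℝ) t)
    (hμinv : ∀ (a : ↥X) (s : S), μ ⟨transBCF s a.1, hXinv a.1 a.2 s⟩ = μ a)
    (z : E) (hzC : z ∈ C)
    (hfix : ∀ (f : E →L[ℝ] ℝ) (a : S →ᵇ ℝ) (ha : a ∈ X),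
      (∀ t : S, a t = f (T t z)) → μ ⟨a, ha⟩ = f z) :
    ∀ t : S, T t z = z := by
  classical
  intro t₀
  by_contra hwz
  haveI : Nonempty S := ⟨t₀⟩
  -- basic memberships and bounds
  have hTC : ∀ t, T t z ∈ C := fun t => hmaps t hzC
  obtain ⟨R, hR0, hR⟩ := my_norm_bdd_of_weak_compact hwcpt
  have horb_le : ∀ t, ‖T t z - z‖ ≤ 2 * R := fun t => by
    calc ‖T t z - z‖ ≤ ‖T t z‖ + ‖z‖ := norm_sub_le _ _
      _ ≤ R + R := add_le_add (hR _ (hTC t)) (hR _ hzC)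
      _ = 2 * R := by ring
  -- orbit functionals
  choose aor haorX haorval using hXorb z hzC
  have hμaor : ∀ f : E →L[ℝ] ℝ, μ ⟨aor f, haorX f⟩ = f z :=
    fun f => hfix f (aor f) (haorX f) (haorval f)
  -- μ of constants
  have hμ1 : μ ⟨1, hX1⟩ = 1 := by
    have h1 := (hμmean ⟨1, hX1⟩).1
    have h2 := (hμmean ⟨1, hX1⟩).2
    have e : ∀ t : S, ((⟨1, hX1⟩ : ↥X) : S →ᵇ ℝ) t = 1 := fun t => rfl
    rw [show (⨅ t : S, ((⟨1, hX1⟩ : ↥X) : S →ᵇ ℝ) t) = 1 by simp [e]] at h1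
    rw [show (⨆ t : S, ((⟨1, hX1⟩ : ↥X) : S →ᵇ ℝ) t) = 1 by simp [e]] at h2
    linarith
  -- the extended mean
  obtain ⟨m, hmX, hmsup⟩ := my_mean_extension X μ hμmean
  have hm1 : m 1 = 1 := by rw [hmX 1 hX1, hμ1]
  have hminf : ∀ (a : S →ᵇ ℝ) (r : ℝ), (∀ t, r ≤ a t) → r ≤ m a := by
    intro a r h
    have h1 : m (-a) ≤ ⨆ t, (-a) t := hmsup (-a)
    have h2 : (⨆ t, (-a) t) ≤ -r := ciSup_le fun t => by
      have := h t
      simp only [BoundedContinuousFunction.coe_neg, Pi.neg_apply]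
      linarith
    rw [map_neg] at h1
    linarith
  have hmle : ∀ (a : S →ᵇ ℝ) (r : ℝ), (∀ t, a t ≤ r) → m a ≤ r := by
    intro a r h
    exact le_trans (hmsup a) (ciSup_le h)
  -- the distance function to z along the orbit
  have hcont : Continuous (fun t : S => ‖T t z - z‖) := continuous_of_discreteTopology
  set cf : S →ᵇ ℝ := BoundedContinuousFunction.ofNormedAddCommGroup _ hcont (2*R) (fun t => by
      rw [Real.norm_eq_abs, abs_of_nonneg (norm_nonneg _)]; exact horb_le t) with hcf
  have hcf_app : ∀ t, cf t = ‖T t z - z‖ := fun t => rfl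
  have hcf_bddA : BddAbove (range fun t => cf t) := by
    refine ⟨2*R, ?_⟩
    rintro - ⟨t, rfl⟩
    exact le_trans (le_of_eq (hcf_app t)) (horb_le t)
  set cstar := ⨆ t, cf t with hcstar
  have hcf_le : ∀ t, cf t ≤ cstar := fun t => le_ciSup hcf_bddA t
  have hcf_nonneg : ∀ t, 0 ≤ cf t := fun t => by rw [hcf_app]; exact norm_nonneg _
  have hcstar_pos : 0 < cstar := by
    refine lt_of_lt_of_le ?_ (hcf_le t₀)
    rw [hcf_app]
    exact norm_pos_iff.mpr (sub_ne_zero.mpr hwz)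
  -- transBCF value
  have htrans_app : ∀ (s : S) (a : S →ᵇ ℝ) (t : S), transBCF s a t = a (s + t) :=
    fun s a t => rfl
  have hsum_app : ∀ (F : ℕ → S →ᵇ ℝ) (sf : Finset ℕ) (t : S),
      (∑ j ∈ sf, F j) t = ∑ j ∈ sf, (F j) t := by
    intro F sf t
    rw [BoundedContinuousFunction.coe_sum]
    exact Finset.sum_apply t sf _
  -- tether inequality
  have htether : ∀ (f : E →L[ℝ] ℝ), ‖f‖ = 1 → ∀ (s t : S),
      f (T s z - z) - cf t ≤ f (T (t + s) z - z) := by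
    intro f hf s t
    have e1 : T (t + s) z = T s (T t z) := by rw [add_comm]; exact hsg s t z hzC
    have e2 : f (T s z - z) - f (T (t + s) z - z) = f (T s z - T (t + s) z) := by
      rw [← map_sub]
      congr 1
      abel
    have e3 : f (T s z - T (t + s) z) ≤ cf t := by
      calc f (T s z - T (t + s) z) ≤ ‖f‖ * ‖T s z - T (t + s) z‖ :=
            le_trans (le_abs_self _) (f.le_opNorm _)
        _ = ‖T s z - T (t + s) z‖ := by rw [hf, one_mul]
        _ ≤ ‖z - T t z‖ := by rw [e1]; exact hne s z hzC (T t z) (hTC t)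
        _ = cf t := by rw [hcf_app, norm_sub_rev]
    linarith [e2 ▸ e3]
  -- the mean of every translate of cf equals cstar
  have hmcf : ∀ q : S, m (transBCF q cf) = cstar := by
    intro q
    have hup : m (transBCF q cf) ≤ cstar :=
      hmle _ _ fun t => by rw [htrans_app]; exact hcf_le _
    have hlow : cstar ≤ m (transBCF q cf) := by
      refine ciSup_le fun ts => ?_
      rcases eq_or_ne (T ts z) z with h | h
      · have : cf ts = 0 := by rw [hcf_app, h, sub_self, norm_zero]
        rw [this]
        exact hminf _ 0 fun t => by rw [htrans_app]; exact hcf_nonneg _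
      · obtain ⟨f, hf1, hfv⟩ := exists_dual_vector ℝ (T ts z - z) (norm_ne_zero_iff.mpr (sub_ne_zero.mpr h))
        have hfv' : f (T ts z - z) = cf ts := by
          rw [hcf_app]
          simpa using hfv
        set G : S →ᵇ ℝ := transBCF (q + ts) (aor f) - (f z) • (1 : S →ᵇ ℝ) with hG
        have hGX : G ∈ X := X.sub_mem (hXinv _ (haorX f) _) (X.smul_mem _ hX1)
        have hmG : m G = 0 := by
          rw [hG, map_sub, map_smul, hmX _ (hXinv _ (haorX f) (q + ts)), hm1]
          have : μ ⟨transBCF (q + ts) (aor f), hXinv _ (haorX f) (q + ts)⟩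
              = μ ⟨aor f, haorX f⟩ := hμinv ⟨aor f, haorX f⟩ (q + ts)
          rw [this, hμaor f]
          simp
        have hptw : ∀ t, cf ts - (transBCF q cf) t ≤ G t := by
          intro t
          have h1 := htether f hf1 ts (q + t)
          rw [hfv'] at h1
          have e : G t = f (T ((q + t) + ts) z - z) := by
            rw [hG]
            simp only [BoundedContinuousFunction.coe_sub, BoundedContinuousFunction.coe_smul,
              BoundedContinuousFunction.coe_one, Pi.sub_apply, Pi.smul_apply, Pi.one_apply,
              smul_eq_mul, mul_one]
            rw [htrans_app, haorval, map_sub]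
            congr 2
            rw [add_right_comm]
          rw [e, htrans_app]
          linarith
        have h0 := hminf (G - ((cf ts) • 1 - transBCF q cf)) 0 (fun t => by
          have := hptw t
          simp only [BoundedContinuousFunction.coe_sub, BoundedContinuousFunction.coe_smul,
            BoundedContinuousFunction.coe_one, Pi.sub_apply, Pi.smul_apply, Pi.one_apply,
            smul_eq_mul, mul_one]
          linarith)
        have h1 : m ((cf ts) • 1 - transBCF q cf) = cf ts - m (transBCF q cf) := by
          rw [map_sub, map_smul, hm1]
          simp
        rw [map_sub, h1, hmG] at h0
        linarith
    linarith
  -- selection principle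
  have hselect : ∀ (Ξ : S →ᵇ ℝ) (B : ℝ), m Ξ ≤ B → ∀ ε > 0, ∃ t, Ξ t < B + ε := by
    intro Ξ B hB ε hε
    by_contra hcon
    push_neg at hcon
    have := hminf Ξ (B + ε) hcon
    linarith
  -- constants
  set κ : ℝ := min cstar 1 with hκ
  have hκpos : 0 < κ := lt_min hcstar_pos one_pos
  have hκ1 : κ ≤ 1 := min_le_right _ _
  have hκc : κ ≤ cstar := min_le_left _ _
  set εb : ℕ → ℝ := fun k => (κ/2) * (4⁻¹ : ℝ)^k with hεb
  have hεbpos : ∀ k, 0 < εb k := fun k => mul_pos (half_pos hκpos) (pow_pos (by norm_num) k)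
  have hεble : ∀ k, εb k ≤ cstar/2 := by
    intro k
    have h1 : (4⁻¹ : ℝ)^k ≤ 1 := pow_le_one₀ (by norm_num) (by norm_num)
    calc εb k ≤ (κ/2) * 1 := by
          exact mul_le_mul_of_nonneg_left h1 (by positivity)
      _ = κ/2 := mul_one _
      _ ≤ cstar/2 := by linarith
  set ηb : ℕ → ℝ := fun j => 2 * (2⁻¹ : ℝ)^j with hηb
  -- the recursive step, stated in total form
  have hstep : ∀ (k : ℕ) (τs : ℕ → S × (E →L[ℝ] ℝ)), ∃ d : S × (E →L[ℝ] ℝ),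
      ((∀ j, j < k → ((∃ ρ, (τs j).1 = t₀ + ρ) ∧ cstar - cf (τs j).1 ≤ εb j ∧
          ‖(τs j).2‖ = 1 ∧ (τs j).2 (T (τs j).1 z - z) = cf (τs j).1)) →
        (((∃ ρ, d.1 = t₀ + ρ) ∧ cstar - cf d.1 ≤ εb k ∧
          ‖d.2‖ = 1 ∧ d.2 (T d.1 z - z) = cf d.1) ∧
          ∀ j, j < k → (τs j).2 (T d.1 z - z) ≤ ηb j)) := by
    intro k τs
    by_cases hh : ∀ j, j < k → ((∃ ρ, (τs j).1 = t₀ + ρ) ∧ cstar - cf (τs j).1 ≤ εb j ∧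
          ‖(τs j).2‖ = 1 ∧ (τs j).2 (T (τs j).1 z - z) = cf (τs j).1)
    swap
    · exact ⟨(t₀, 0), fun h => absurd h hh⟩
    set s₀ : S := ((List.range k).map (fun j => (τs j).1)).foldl (· + ·) (t₀ + t₀) with hs₀
    set M : ℝ := 2 / εb k with hM
    have hMpos : 0 < M := div_pos two_pos (hεbpos k)
    set Ξ : S →ᵇ ℝ := M • ((cstar • (1:S →ᵇ ℝ)) - transBCF s₀ cf)
      + ∑ j ∈ Finset.range k, (2:ℝ)^j •
          (transBCF s₀ (aor (τs j).2) - ((τs j).2 z) • (1:S →ᵇ ℝ) + εb j • (1:S →ᵇ ℝ)) with hΞ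
    -- value of m on Ξ
    have hmΞ : m Ξ ≤ 1 := by
      have e1 : m ((cstar • (1:S →ᵇ ℝ)) - transBCF s₀ cf) = 0 := by
        rw [map_sub, map_smul, hm1, hmcf s₀]
        simp
      have e2 : ∀ j, m (transBCF s₀ (aor (τs j).2) - ((τs j).2 z) • (1:S →ᵇ ℝ)
          + εb j • (1:S →ᵇ ℝ)) = εb j := by
        intro j
        rw [map_add, map_sub, map_smul, map_smul, hm1,
          hmX _ (hXinv _ (haorX (τs j).2) s₀)]
        have : μ ⟨transBCF s₀ (aor (τs j).2), hXinv _ (haorX (τs j).2) s₀⟩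
            = μ ⟨aor (τs j).2, haorX (τs j).2⟩ := hμinv ⟨aor (τs j).2, haorX (τs j).2⟩ s₀
        rw [this, hμaor]
        simp
      have e3 : m Ξ = ∑ j ∈ Finset.range k, (2:ℝ)^j * εb j := by
        rw [hΞ, map_add, map_smul, e1, map_sum]
        simp only [map_smul, smul_eq_mul, mul_zero, zero_add]
        refine Finset.sum_congr rfl fun j _ => ?_
        rw [e2 j]
      rw [e3]
      have e4 : ∀ j, (2:ℝ)^j * εb j = (κ/2) * (1/2:ℝ)^j := by
        intro j
        rw [hεb]
        simp only
        rw [show ((2:ℝ)^j * ((κ/2) * (4⁻¹:ℝ)^j)) = (κ/2) * ((2:ℝ)^j * (4⁻¹:ℝ)^j) by ring,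
          ← mul_pow]
        norm_num
      rw [Finset.sum_congr rfl fun j _ => e4 j, ← Finset.mul_sum]
      have := sum_geometric_two_le k
      calc (κ/2) * ∑ j ∈ Finset.range k, (1/2:ℝ)^j ≤ (κ/2) * 2 := by
            exact mul_le_mul_of_nonneg_left this (by positivity)
        _ = κ := by ring
        _ ≤ 1 := hκ1
    -- pointwise values
    have hterm_app : ∀ j t, ((2:ℝ)^j • (transBCF s₀ (aor (τs j).2)
        - ((τs j).2 z) • (1:S →ᵇ ℝ) + εb j • (1:S →ᵇ ℝ))) t
        = (2:ℝ)^j * ((τs j).2 (T (s₀ + t) z - z) + εb j) := by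
      intro j t
      have e0 : (transBCF s₀ (aor (τs j).2)) t = (τs j).2 (T (s₀ + t) z) := by
        rw [htrans_app, haorval]
      simp only [BoundedContinuousFunction.coe_add, BoundedContinuousFunction.coe_smul,
        BoundedContinuousFunction.coe_sub, BoundedContinuousFunction.coe_one, Pi.add_apply,
        Pi.smul_apply, Pi.sub_apply, Pi.one_apply, smul_eq_mul, mul_one]
      rw [e0, map_sub]
    have hfirst_app : ∀ t, ((cstar • (1:S →ᵇ ℝ)) - transBCF s₀ cf) t = cstar - cf (s₀ + t) := by
      intro t
      have e0 : (transBCF s₀ cf) t = cf (s₀ + t) := htrans_app _ _ _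
      simp only [BoundedContinuousFunction.coe_sub, BoundedContinuousFunction.coe_smul,
        BoundedContinuousFunction.coe_one, Pi.sub_apply, Pi.smul_apply, Pi.one_apply,
        smul_eq_mul, mul_one]
      rw [e0]
    have hΞval : ∀ t, Ξ t = M * (cstar - cf (s₀ + t))
        + ∑ j ∈ Finset.range k, (2:ℝ)^j * ((τs j).2 (T (s₀ + t) z - z) + εb j) := by
      intro t
      rw [hΞ]
      rw [BoundedContinuousFunction.add_apply, BoundedContinuousFunction.smul_apply,
        hfirst_app t]
      rw [hsum_app]
      rw [Finset.sum_congr rfl fun j _ => hterm_app j t]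
      simp [smul_eq_mul]
    -- pointwise nonnegativity of the summands
    have hpos1 : ∀ t, 0 ≤ M * (cstar - cf (s₀ + t)) :=
      fun t => mul_nonneg hMpos.le (by linarith [hcf_le (s₀ + t)])
    have hpos2 : ∀ t, ∀ j ∈ Finset.range k,
        0 ≤ (2:ℝ)^j * ((τs j).2 (T (s₀ + t) z - z) + εb j) := by
      intro t j hj
      have hj' := Finset.mem_range.mp hj
      obtain ⟨hρ, hcb, hn1, hnv⟩ := hh j hj'
      have hmem : (τs j).1 ∈ (List.range k).map (fun j => (τs j).1) :=
        List.mem_map.mpr ⟨j, List.mem_range.mpr hj', rfl⟩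
      obtain ⟨r, hr⟩ := my_foldl_add_mem _ (t₀ + t₀) _ hmem t
      rw [← hs₀] at hr
      have h1 := htether (τs j).2 hn1 (τs j).1 r
      rw [hnv] at h1
      have h2 : T (r + (τs j).1) z = T (s₀ + t) z := by
        rw [add_comm r, ← hr]
      rw [h2] at h1
      have h3 : (cstar - εb j) - cstar ≤ (τs j).2 (T (s₀ + t) z - z) := by
        have := hcf_le r
        linarith
      refine mul_nonneg (by positivity) ?_
      linarith
    -- select a good point
    obtain ⟨tp, htp⟩ := hselect Ξ 1 hmΞ 1 one_pos
    rw [hΞval] at htp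
    have hsum_nonneg : 0 ≤ ∑ j ∈ Finset.range k, (2:ℝ)^j *
        ((τs j).2 (T (s₀ + tp) z - z) + εb j) :=
      Finset.sum_nonneg (hpos2 tp)
    -- the new point
    set τn : S := s₀ + tp with hτn
    have hc1 : cstar - cf τn ≤ εb k := by
      have h1 : M * (cstar - cf τn) < 2 := by rw [hτn]; linarith
      have h2 : cstar - cf τn < 2 / M := by
        rw [lt_div_iff₀ hMpos]
        linarith [mul_comm M (cstar - cf τn)]
      have h3 : (2:ℝ) / M = εb k := by
        rw [hM]
        field_simp
      linarith [h2.le.trans_eq h3]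
    have hc2 : ∀ j, j < k → (τs j).2 (T τn z - z) ≤ ηb j := by
      intro j hj
      have hterm : (2:ℝ)^j * ((τs j).2 (T τn z - z) + εb j)
          ≤ ∑ i ∈ Finset.range k, (2:ℝ)^i * ((τs i).2 (T (s₀ + tp) z - z) + εb i) := by
        refine Finset.single_le_sum (hpos2 tp) (Finset.mem_range.mpr hj)
      have h2 : (2:ℝ)^j * ((τs j).2 (T τn z - z) + εb j) < 2 := by
        have := hpos1 tp
        rw [hτn] at hterm
        linarith
      have h3 : (τs j).2 (T τn z - z) + εb j < 2 / (2:ℝ)^j := by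
        rw [lt_div_iff₀ (by positivity : (0:ℝ) < (2:ℝ)^j)]
        linarith [mul_comm ((2:ℝ)^j) ((τs j).2 (T τn z - z) + εb j)]
      have h4 : (2:ℝ) / (2:ℝ)^j = ηb j := by
        rw [hηb]
        simp only
        rw [div_eq_mul_inv, ← inv_pow]
      have := hεbpos j
      linarith [h3.trans_eq h4]
    have hcpos : 0 < cf τn := by
      have := hεble k
      linarith [hc1]
    have hne0 : T τn z - z ≠ 0 := by
      intro h0
      rw [hcf_app, h0, norm_zero] at hcpos
      exact lt_irrefl _ hcpos
    obtain ⟨fn, hfn1, hfnv⟩ := exists_dual_vector ℝ (T τn z - z) (norm_ne_zero_iff.mpr hne0)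
    refine ⟨(τn, fn), fun _ => ⟨⟨?_, hc1, hfn1, ?_⟩, hc2⟩⟩
    · obtain ⟨d, hd⟩ := my_foldl_add_shift ((List.range k).map (fun j => (τs j).1)) (t₀ + t₀) tp
      rw [← hs₀] at hd
      exact ⟨t₀ + d, by rw [hτn, hd, add_assoc]⟩
    · rw [hcf_app]
      simpa using hfnv
  -- build the chain by recursion with choice
  choose FF hFF using hstep
  set pick : List (S × (E →L[ℝ] ℝ)) → S × (E →L[ℝ] ℝ) :=
    fun l => FF l.length (fun j => l.getD j (t₀, 0)) with hpick
  set hist : ℕ → List (S × (E →L[ℝ] ℝ)) :=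
    fun k => Nat.rec [] (fun _ ih => ih ++ [pick ih]) k with hhist
  have hist_succ : ∀ k, hist (k+1) = hist k ++ [pick (hist k)] := fun k => rfl
  have hlen : ∀ k, (hist k).length = k := by
    intro k
    induction k with
    | zero => rfl
    | succ k ih =>
        rw [hist_succ, List.length_append, ih]
        rfl
  set ds : ℕ → S × (E →L[ℝ] ℝ) := fun k => pick (hist k) with hds
  have hist_get : ∀ k j, j < k → (hist k).getD j (t₀, 0) = ds j := by
    intro k
    induction k with
    | zero => intro j hj; omega
    | succ k ih =>
        intro j hj
        rw [hist_succ]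
        rcases Nat.lt_succ_iff_lt_or_eq.mp hj with h | h
        · rw [List.getD_append _ _ _ _ (by rw [hlen]; exact h)]
          exact ih j h
        · subst h
          rw [List.getD_append_right _ _ _ _ (by rw [hlen])]
          rw [hlen, Nat.sub_self]
          rfl
  set τv : ℕ → S := fun k => (ds k).1 with hτvdef
  set fv : ℕ → (E →L[ℝ] ℝ) := fun k => (ds k).2 with hfvdef
  have hchain : ∀ k, ((∃ ρ, τv k = t₀ + ρ) ∧ cstar - cf (τv k) ≤ εb k ∧
      ‖fv k‖ = 1 ∧ fv k (T (τv k) z - z) = cf (τv k)) ∧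
      ∀ j, j < k → fv j (T (τv k) z - z) ≤ ηb j := by
    intro k
    induction k using Nat.strong_induction_on with
    | _ k ih =>
      have hds_eq : ds k = FF k (fun j => (hist k).getD j (t₀, 0)) := by
        rw [hds]
        simp only [hpick]
        congr 1
        exact hlen k
      have hhyp : ∀ j, j < k → ((∃ ρ, ((fun j => (hist k).getD j (t₀, 0)) j).1 = t₀ + ρ) ∧
          cstar - cf ((fun j => (hist k).getD j (t₀, 0)) j).1 ≤ εb j ∧
          ‖((fun j => (hist k).getD j (t₀, 0)) j).2‖ = 1 ∧
          ((fun j => (hist k).getD j (t₀, 0)) j).2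
            (T ((fun j => (hist k).getD j (t₀, 0)) j).1 z - z)
            = cf ((fun j => (hist k).getD j (t₀, 0)) j).1) := by
        intro j hj
        simp only [hist_get k j hj]
        exact (ih j hj).1
      have key := hFF k (fun j => (hist k).getD j (t₀, 0)) hhyp
      constructor
      · have := key.1
        rw [← hds_eq] at this
        exact this
      · intro j hj
        have h' := key.2 j hj
        rw [hist_get k j hj] at h'
        rw [show (FF k fun j => (hist k).getD j (t₀, 0)) = ds k from hds_eq.symm] at h'
        exact h'
  -- the sequence and its weakly convergent subsequence
  set xx : ℕ → E := fun k => T (τv k) z with hxxdef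
  obtain ⟨u, φ, huC, hφ, hconv⟩ := my_weak_seq_compact hwcpt xx (fun k => hTC _)
  have hφ_le : ∀ i, i ≤ φ i := fun i => hφ.le_apply
  -- εb and ηb tend to zero along φ
  have hgeom4 : Tendsto (fun i : ℕ => ((4:ℝ)⁻¹)^i) atTop (𝓝 0) :=
    tendsto_pow_atTop_nhds_zero_of_lt_one (by norm_num) (by norm_num)
  have hgeom2 : Tendsto (fun i : ℕ => ((2:ℝ)⁻¹)^i) atTop (𝓝 0) :=
    tendsto_pow_atTop_nhds_zero_of_lt_one (by norm_num) (by norm_num)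
  have hεb0 : Tendsto (fun i => εb (φ i)) atTop (𝓝 0) := by
    apply squeeze_zero (fun i => (hεbpos (φ i)).le) (g := fun i => (κ/2) * ((4:ℝ)⁻¹)^i)
    · intro i
      rw [hεb]
      simp only
      exact mul_le_mul_of_nonneg_left
        (pow_le_pow_of_le_one (by norm_num) (by norm_num) (hφ_le i)) (by positivity)
    · simpa using hgeom4.const_mul (κ/2)
  have hηb0 : Tendsto (fun i => ηb (φ i)) atTop (𝓝 0) := by
    apply squeeze_zero (g := fun i => 2 * ((2:ℝ)⁻¹)^i)
    · intro i
      rw [hηb]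
      positivity
    · intro i
      rw [hηb]
      simp only
      exact mul_le_mul_of_nonneg_left
        (pow_le_pow_of_le_one (by norm_num) (by norm_num) (hφ_le i)) (by norm_num)
    · simpa using hgeom2.const_mul (2:ℝ)
  -- the distance to z converges to cstar
  have hxz : ∀ k, ‖xx k - z‖ = cf (τv k) := fun k => (hcf_app _).symm
  have hdist_z : Tendsto (fun i => ‖xx (φ i) - z‖) atTop (𝓝 cstar) := by
    have hlow : ∀ i, cstar - εb (φ i) ≤ ‖xx (φ i) - z‖ := by
      intro i
      rw [hxz]
      linarith [(hchain (φ i)).1.2.1]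
    have hup : ∀ i, ‖xx (φ i) - z‖ ≤ cstar := by
      intro i
      rw [hxz]
      exact hcf_le _
    have h1 : Tendsto (fun i => cstar - εb (φ i)) atTop (𝓝 cstar) := by
      simpa using (tendsto_const_nhds (x := cstar) (f := atTop)).sub hεb0
    exact tendsto_of_tendsto_of_tendsto_of_le_of_le h1 tendsto_const_nhds hlow hup
  have hliminf_z : liminf (fun i => ‖xx (φ i) - z‖) atTop = cstar := hdist_z.liminf_eq
  by_cases hu : u = z
  · -- case u = z : contradiction via Opial with y = T t₀ z
    have hOp := hOpial (fun i => xx (φ i)) z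
      (by rw [← hu]; exact fun f => hconv f) (T t₀ z) hwz
    have hble : ∀ i, ‖xx (φ i) - T t₀ z‖ ≤ cstar := by
      intro i
      obtain ⟨ρ, hρ⟩ := (hchain (φ i)).1.1
      have e1 : xx (φ i) = T t₀ (T ρ z) := by
        show T (τv (φ i)) z = _
        rw [hρ]
        exact hsg t₀ ρ z hzC
      rw [e1]
      calc ‖T t₀ (T ρ z) - T t₀ z‖ ≤ ‖T ρ z - z‖ := hne t₀ (T ρ z) (hTC ρ) z hzC
        _ = cf ρ := (hcf_app ρ).symm
        _ ≤ cstar := hcf_le ρ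
    have h2 : liminf (fun i => ‖xx (φ i) - T t₀ z‖) atTop ≤ cstar :=
      liminf_le_of_frequently_le (Frequently.of_forall hble)
        (isBoundedUnder_of ⟨0, fun i => norm_nonneg _⟩)
    rw [hliminf_z] at hOp
    linarith
  · -- case u ≠ z : contradiction via Opial with y = z
    have hOp := hOpial (fun i => xx (φ i)) u (fun f => hconv f) z (fun h => hu h.symm)
    rw [hliminf_z] at hOp
    have hfu : ∀ j, fv j (u - z) ≤ ηb j := by
      intro j
      have htend : Tendsto (fun i => fv j (xx (φ i) - z)) atTop (𝓝 (fv j (u - z))) := by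
        have h1 := (hconv (fv j)).sub_const (fv j z)
        have e : ∀ i, fv j (xx (φ i)) - fv j z = fv j (xx (φ i) - z) := fun i =>
          (map_sub (fv j) _ _).symm
        have e2 : fv j u - fv j z = fv j (u - z) := (map_sub (fv j) _ _).symm
        rw [show (fun i => fv j (xx (φ i) - z)) = fun i => fv j (xx (φ i)) - fv j z from
          funext fun i => (e i).symm, ← e2]
        exact h1
      refine le_of_tendsto htend ?_
      filter_upwards [eventually_gt_atTop j] with i hi
      exact (hchain (φ i)).2 j (lt_of_lt_of_le hi (hφ_le i))
    have hlow : ∀ i, cstar - εb (φ i) - ηb (φ i) ≤ ‖xx (φ i) - u‖ := by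
      intro i
      have h1 : fv (φ i) (xx (φ i) - u) ≤ ‖xx (φ i) - u‖ := by
        calc fv (φ i) (xx (φ i) - u) ≤ ‖fv (φ i)‖ * ‖xx (φ i) - u‖ :=
              le_trans (le_abs_self _) ((fv (φ i)).le_opNorm _)
          _ = ‖xx (φ i) - u‖ := by rw [(hchain (φ i)).1.2.2.1, one_mul]
      have h2 : fv (φ i) (xx (φ i) - u) = fv (φ i) (xx (φ i) - z) - fv (φ i) (u - z) := by
        rw [← map_sub]
        congr 1
        abel
      have h3 : fv (φ i) (xx (φ i) - z) = cf (τv (φ i)) := (hchain (φ i)).1.2.2.2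
      have h4 := (hchain (φ i)).1.2.1
      have h5 := hfu (φ i)
      linarith [h2 ▸ h1]
    have hlims : Tendsto (fun i => cstar - εb (φ i) - ηb (φ i)) atTop (𝓝 cstar) := by
      have := ((tendsto_const_nhds (x := cstar) (f := atTop)).sub hεb0).sub hηb0
      simpa using this
    have hfinal : cstar ≤ liminf (fun i => ‖xx (φ i) - u‖) atTop := by
      rw [← hlims.liminf_eq]
      refine liminf_le_liminf (Eventually.of_forall hlow) ?_ ?_
      · refine isBoundedUnder_of ⟨cstar - κ/2 - 2, fun i => ?_⟩
        have hε := hεble (φ i)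
        have hη : ηb (φ i) ≤ 2 := by
          rw [hηb]
          simp only
          have : ((2:ℝ)⁻¹)^(φ i) ≤ 1 := pow_le_one₀ (by norm_num) (by norm_num)
          linarith
        have : κ/2 ≤ cstar/2 := by linarith
        have hε2 : εb (φ i) ≤ κ/2 := by
          rw [hεb]
          simp only
          have h1 : ((4:ℝ)⁻¹)^(φ i) ≤ 1 := pow_le_one₀ (by norm_num) (by norm_num)
          nlinarith [half_pos hκpos]
        linarith
      · refine IsBoundedUnder.isCoboundedUnder_ge (isBoundedUnder_of ⟨R + ‖u‖, fun i => ?_⟩)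
        calc ‖xx (φ i) - u‖ ≤ ‖xx (φ i)‖ + ‖u‖ := norm_sub_le _ _
          _ ≤ R + ‖u‖ := by
              have : xx (φ i) ∈ C := hTC _
              linarith [hR _ this]
    linarith
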